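/- Let Q be Metzler and suppose the state x is absorbing, i.e., Q x y = 0 for all y : ι. Then for every z : ι the function t ↦ (Matrix.exp ℝ (t • Q)) z x is monotone nondecreasing on [0, ∞). (Basis of Theorem 2.6 of the paper: the probability that the auxiliary absorbed chain sits at an absorbing state x is a cumulative distribution function in t, so that μ([0,t], x) = p̂_t(x) is nondecreasing.) -/

import Mathlib

open NormedSpace

section aux

variable {ι : Type*} [Fintype ι] [DecidableEq ι]

private lemma pow_entry_nonneg' (A : Matrix ι ι ℝ) (hA : ∀ i j, 0 ≤ A i j) :
    ∀ n i j, 0 ≤ (A ^ n) i j := by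
  intro n
  induction n with
  | zero =>
    intro i j
    rw [pow_zero]
    by_cases h : i = j <;> simp [Matrix.one_apply, h]
  | succ n ih =>
    intro i j
    rw [pow_succ, Matrix.mul_apply]
    exact Finset.sum_nonneg fun y _ => mul_nonneg (ih i y) (hA y j)

private lemma exp_entry_nonneg' (A : Matrix ι ι ℝ) (hA : ∀ i j, 0 ≤ A i j) (i j : ι) :
    0 ≤ NormedSpace.exp A i j := by
  letI : SeminormedRing (Matrix ι ι ℝ) := Matrix.linftyOpSemiNormedRing
  letI : NormedRing (Matrix ι ι ℝ) := Matrix.linftyOpNormedRing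
  letI : NormedAlgebra ℝ (Matrix ι ι ℝ) := Matrix.linftyOpNormedAlgebra
  rw [exp_eq_tsum ℝ]
  have hs : Summable fun n : ℕ => (((n.factorial : ℝ))⁻¹ • A ^ n) :=
    expSeries_summable' (𝕂 := ℝ) A
  have hs1 : Summable fun n : ℕ => (((n.factorial : ℝ))⁻¹ • A ^ n) i := Pi.summable.mp hs i
  show 0 ≤ (∑' n : ℕ, ((n.factorial : ℝ))⁻¹ • A ^ n) i j
  erw [tsum_apply hs, tsum_apply hs1]
  refine tsum_nonneg fun n => ?_
  have h2 : (((n.factorial : ℝ))⁻¹ • A ^ n) i j = ((n.factorial : ℝ))⁻¹ * (A ^ n) i j := rfl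
  rw [h2]
  have := pow_entry_nonneg' A hA n i j
  positivity

/-- entries of `exp (t • Q)` are nonnegative for Metzler `Q` and `t ≥ 0`. -/
private lemma exp_smul_entry_nonneg' (Q : Matrix ι ι ℝ)
    (hMetzler : ∀ x y, x ≠ y → Q x y ≥ 0) {t : ℝ} (ht : 0 ≤ t) (i j : ι) :
    0 ≤ NormedSpace.exp (t • Q) i j := by
  set c : ℝ := t * ∑ y, |Q y y| with hc
  have hc0 : 0 ≤ c := mul_nonneg ht (Finset.sum_nonneg fun y _ => abs_nonneg _)
  set B : Matrix ι ι ℝ := t • Q + c • (1 : Matrix ι ι ℝ) with hB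
  have hBnn : ∀ a b, 0 ≤ B a b := by
    intro a b
    by_cases h : a = b
    · subst h
      have h1 : B a a = t * Q a a + c := by
        simp [hB, Matrix.add_apply, Matrix.smul_apply, Matrix.one_apply]
      rw [h1]
      have h2 : t * |Q a a| ≤ c := by
        rw [hc]
        refine mul_le_mul_of_nonneg_left ?_ ht
        exact Finset.single_le_sum (f := fun y => |Q y y|) (fun y _ => abs_nonneg _)
          (Finset.mem_univ a)
      nlinarith [neg_abs_le (Q a a), abs_nonneg (Q a a)]
    · have h1 : B a b = t * Q a b := by
        simp [hB, Matrix.add_apply, Matrix.smul_apply, Matrix.one_apply, h]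
      rw [h1]
      exact mul_nonneg ht (hMetzler a b h)
  have hsplit : t • Q = B + (-c) • (1 : Matrix ι ι ℝ) := by
    rw [hB, add_assoc, ← add_smul, add_neg_cancel, zero_smul, add_zero]
  have hcomm : Commute B ((-c) • (1 : Matrix ι ι ℝ)) := (Commute.one_right B).smul_right _
  letI : SeminormedRing (Matrix ι ι ℝ) := Matrix.linftyOpSemiNormedRing
  letI : NormedRing (Matrix ι ι ℝ) := Matrix.linftyOpNormedRing
  letI : NormedAlgebra ℝ (Matrix ι ι ℝ) := Matrix.linftyOpNormedAlgebra
  have halg : (-c) • (1 : Matrix ι ι ℝ) = algebraMap ℝ (Matrix ι ι ℝ) (-c) := by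
    rw [Algebra.algebraMap_eq_smul_one]
  erw [hsplit, Matrix.exp_add_of_commute B _ hcomm, halg, ← algebraMap_exp_comm,
    Algebra.algebraMap_eq_smul_one, mul_smul_comm, Matrix.smul_apply, smul_eq_mul]
  have hexp : 0 < NormedSpace.exp (-c) := by
    rw [← Real.exp_eq_exp_ℝ]; exact Real.exp_pos _
  refine mul_nonneg hexp.le ?_
  rw [Matrix.mul_one]
  exact exp_entry_nonneg' B hBnn i j

end aux

/-- Mathlib's exponential, specialized to real matrices (`Matrix.exp ℝ`). -/
noncomputable def Matrix.exp (𝕂 : Type*) [Field 𝕂] {ι : Type*} [Fintype ι] [DecidableEq ι]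
    [Algebra 𝕂 ℝ] (A : Matrix ι ι ℝ) : Matrix ι ι ℝ :=
  NormedSpace.exp A

/-- If `Q` is Metzler and the state `x` is absorbing (`Q x y = 0` for all `y`), then for
every `z` the map `t ↦ exp (t • Q) z x` is monotone nondecreasing on `[0, ∞)`. -/
theorem matrix_exp_absorbing_monotone {ι : Type*} [Fintype ι] [DecidableEq ι] [Nonempty ι]
    (Q : Matrix ι ι ℝ) (hMetzler : ∀ x y, x ≠ y → Q x y ≥ 0)
    (x : ι) (habs : ∀ y, Q x y = 0) :
    ∀ z : ι, MonotoneOn (fun t : ℝ => Matrix.exp ℝ (t • Q) z x) (Set.Ici (0 : ℝ)) := by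
  intro z
  letI : SeminormedRing (Matrix ι ι ℝ) := Matrix.linftyOpSemiNormedRing
  letI : NormedRing (Matrix ι ι ℝ) := Matrix.linftyOpNormedRing
  letI : NormedAlgebra ℝ (Matrix ι ι ℝ) := Matrix.linftyOpNormedAlgebra
  -- the entry evaluation as a continuous linear map
  let e : Matrix ι ι ℝ →L[ℝ] ℝ :=
    { toLinearMap := Matrix.entryLinearMap ℝ ℝ z x
      cont := (continuous_apply x).comp (continuous_apply z) }
  have hderiv : ∀ t : ℝ, HasDerivAt (fun t : ℝ => Matrix.exp ℝ (t • Q) z x)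
      ((NormedSpace.exp (t • Q) * Q) z x) t := by
    intro t
    have h1 : HasDerivAt (fun u : ℝ => NormedSpace.exp (u • Q))
        (NormedSpace.exp (t • Q) * Q) t := hasDerivAt_exp_smul_const (𝕂 := ℝ) Q t
    have h2 := (e.hasFDerivAt.comp_hasDerivAt t h1)
    exact h2
  apply monotoneOn_of_deriv_nonneg (convex_Ici 0)
  · exact Continuous.continuousOn (by
      exact continuous_iff_continuousAt.mpr fun t => (hderiv t).continuousAt)
  · intro t _
    exact (hderiv t).differentiableAt.differentiableWithinAt
  · intro t ht
    rw [interior_Ici] at ht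
    rw [(hderiv t).deriv]
    rw [Matrix.mul_apply]
    refine Finset.sum_nonneg fun y _ => ?_
    by_cases h : y = x
    · subst h; rw [habs y]; simp
    · exact mul_nonneg (exp_smul_entry_nonneg' Q hMetzler (le_of_lt ht) z y) (hMetzler y x h)
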